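/- For H ∈ (0,1/2), T > 0, and f(s) = e^{s/T} 1_{s≤0}, the function 𝒦_H(u) = 1_{u≤0} [ (−u)^{2H−1} − (2/T) ∫_u^0 e^{2s/T} (s−u)^{2H−1} ds ] satisfies ∫_ℝ 𝒦_H(u) du = 0. -/

import Mathlib

open MeasureTheory Real Set Filter intervalIntegral

namespace KIZ

variable {T p : ℝ}

/-- base integrand -/
noncomputable def base (T p : ℝ) (v : ℝ) : ℝ := Real.exp (2*v/T) * v ^ p

noncomputable def Phi (T p : ℝ) (x : ℝ) : ℝ := ∫ v in (0:ℝ)..x, base T p v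

noncomputable def f0 (T p : ℝ) (x : ℝ) : ℝ :=
  x ^ p - (2/T) * (Real.exp (-(2*x)/T) * Phi T p x)

lemma measurable_base : Measurable (base T p) := by
  unfold base; fun_prop

lemma intInt (hp1 : -1 < p) (a b : ℝ) : IntervalIntegrable (base T p) volume a b := by
  have h := intervalIntegrable_rpow' (a := a) (b := b) hp1
  have : IntervalIntegrable (fun v : ℝ => Real.exp (2*v/T) * v ^ p) volume a b :=
    h.continuousOn_mul (by fun_prop)
  exact this

lemma continuous_Phi (hp1 : -1 < p) : Continuous (Phi T p) :=
  intervalIntegral.continuous_primitive (intInt hp1) 0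

lemma Phi_deriv (hp1 : -1 < p) {x : ℝ} (hx : 0 < x) :
    HasDerivAt (Phi T p) (Real.exp (2*x/T) * x ^ p) x := by
  have := intervalIntegral.integral_hasDerivAt_right (f := base T p)
    (intInt hp1 0 x)
    (measurable_base.stronglyMeasurable.stronglyMeasurableAtFilter)
    (by
      have h1 : ContinuousAt (fun v : ℝ => v ^ p) x :=
        Real.continuousAt_rpow_const x p (Or.inl hx.ne')
      exact (((Real.continuous_exp.comp (by fun_prop)).continuousAt (x := x))).mul h1)
  exact this

/-- substitution: the inner integral in the theorem equals `exp(2u/T) * Phi (-u)`. -/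
lemma subst_lemma (u : ℝ) :
    (∫ s in u..0, Real.exp (2*s/T) * (s - u) ^ p)
      = Real.exp (2*u/T) * Phi T p (-u) := by
  have h := intervalIntegral.integral_comp_add_right (a := (0:ℝ)) (b := -u)
    (fun s => Real.exp (2*s/T) * (s - u) ^ p) u
  simp only [zero_add, neg_add_cancel] at h
  rw [← h]
  have : ∀ v : ℝ, Real.exp (2*(v+u)/T) * ((v+u) - u) ^ p
      = Real.exp (2*u/T) * (Real.exp (2*v/T) * v ^ p) := by
    intro v
    rw [add_sub_cancel_right, show 2*(v+u)/T = 2*u/T + 2*v/T by ring, Real.exp_add, mul_assoc]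
  calc (∫ v in (0:ℝ)..(-u), Real.exp (2*(v+u)/T) * ((v+u) - u) ^ p)
      = ∫ v in (0:ℝ)..(-u), Real.exp (2*u/T) * (Real.exp (2*v/T) * v ^ p) := by
        exact intervalIntegral.integral_congr (fun v _ => this v)
    _ = Real.exp (2*u/T) * Phi T p (-u) := intervalIntegral.integral_const_mul _ _

/-- exp integral -/
lemma exp_int (hT : 0 < T) (c a b : ℝ) :
    ∫ v in a..b, Real.exp ((c + 2*v)/T) = (T/2) * (Real.exp ((c+2*b)/T) - Real.exp ((c+2*a)/T)) := by
  have hd : ∀ v : ℝ, HasDerivAt (fun v => (T/2) * Real.exp ((c + 2*v)/T))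
      (Real.exp ((c + 2*v)/T)) v := by
    intro v
    have h1 : HasDerivAt (fun v : ℝ => (c + 2*v)/T) (2/T) v := by
      simpa using (((hasDerivAt_id v).const_mul 2).const_add c).div_const T
    have h2 := (h1.exp).const_mul (T/2)
    refine h2.congr_deriv ?_
    field_simp
  rw [intervalIntegral.integral_eq_sub_of_hasDerivAt (fun v _ => hd v)
    ((Real.continuous_exp.comp (by fun_prop)).intervalIntegrable a b)]
  ring

/-- mean value / tangent-line bound -/
lemma rpow_sub_rpow_le (hp0 : p < 0) {a b : ℝ} (ha : 0 < a) (hab : a ≤ b) :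
    a ^ p - b ^ p ≤ (-p) * (b - a) * a ^ (p - 1) := by
  rcases eq_or_lt_of_le hab with rfl | hab'
  · simp
  · have hcont : ContinuousOn (fun t : ℝ => t ^ p) (Icc a b) := by
      intro t ht
      exact (Real.continuousAt_rpow_const t p (Or.inl (by linarith [ht.1] : t ≠ 0))).continuousWithinAt
    have hderiv : ∀ x ∈ Ioo a b, HasDerivAt (fun t : ℝ => t ^ p) (p * x ^ (p-1)) x := by
      intro x hx
      exact Real.hasDerivAt_rpow_const (Or.inl (by linarith [hx.1] : x ≠ 0))
    obtain ⟨ξ, hξ, hs⟩ := exists_hasDerivAt_eq_slope (fun t : ℝ => t ^ p)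
      (fun x => p * x ^ (p-1)) hab' hcont hderiv
    have hba : (0:ℝ) < b - a := by linarith
    have heq : b ^ p - a ^ p = p * ξ ^ (p-1) * (b - a) := by
      field_simp at hs; linarith [hs]
    have hxi : ξ ^ (p-1) ≤ a ^ (p-1) :=
      Real.rpow_le_rpow_of_nonpos ha (le_of_lt hξ.1) (by linarith)
    have h5 : (-p) * (b - a) * ξ ^ (p-1) ≤ (-p) * (b - a) * a ^ (p-1) :=
      mul_le_mul_of_nonneg_left hxi (by nlinarith)
    have h6 : a ^ p - b ^ p = (-p) * (b - a) * ξ ^ (p-1) := by linear_combination -heq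
    linarith

lemma le_mul_exp {c : ℝ} (hc : 0 < c) (x : ℝ) : x ≤ c * Real.exp (x / c) := by
  have h : x / c ≤ Real.exp (x / c) := by linarith [Real.add_one_le_exp (x / c)]
  calc x = c * (x / c) := by field_simp
    _ ≤ c * Real.exp (x / c) := mul_le_mul_of_nonneg_left h hc.le

lemma G_deriv (hT : 0 < T) (hp1 : -1 < p) {x : ℝ} (hx : 0 < x) :
    HasDerivAt (fun y => Real.exp (-(2*y)/T) * Phi T p y) (f0 T p x) x := by
  have hΦ := Phi_deriv (T := T) hp1 hx
  have h1 : HasDerivAt (fun y : ℝ => -(2*y)/T) (-2/T) x := by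
    simpa using (((hasDerivAt_id x).const_mul 2).neg.div_const T)
  have he := h1.exp
  have h2 := he.mul hΦ
  have harg : Real.exp (-(2*x)/T) * Real.exp (2*x/T) = 1 := by
    rw [← Real.exp_add, show -(2*x)/T + 2*x/T = 0 by ring, Real.exp_zero]
  have h3 : Real.exp (-(2*x)/T) * (-2/T) * Phi T p x
      + Real.exp (-(2*x)/T) * (Real.exp (2*x/T) * x ^ p) = f0 T p x := by
    unfold f0
    calc Real.exp (-(2*x)/T) * (-2/T) * Phi T p x
        + Real.exp (-(2*x)/T) * (Real.exp (2*x/T) * x ^ p)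
        = (Real.exp (-(2*x)/T) * Real.exp (2*x/T)) * x ^ p
          - (2/T) * (Real.exp (-(2*x)/T) * Phi T p x) := by ring
      _ = x ^ p - (2/T) * (Real.exp (-(2*x)/T) * Phi T p x) := by rw [harg]; ring
  exact h3 ▸ h2

lemma exp_int1 (hT : 0 < T) (c a b : ℝ) :
    ∫ v in a..b, Real.exp ((c + v)/T) = T * (Real.exp ((c+b)/T) - Real.exp ((c+a)/T)) := by
  have hd : ∀ v : ℝ, HasDerivAt (fun v => T * Real.exp ((c + v)/T))
      (Real.exp ((c + v)/T)) v := by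
    intro v
    have h1 : HasDerivAt (fun v : ℝ => (c + v)/T) (1/T) v := by
      simpa using ((hasDerivAt_id v).const_add c).div_const T
    have h2 := (h1.exp).const_mul T
    refine h2.congr_deriv ?_
    field_simp
  rw [intervalIntegral.integral_eq_sub_of_hasDerivAt (fun v _ => hd v)
    ((Real.continuous_exp.comp (by fun_prop)).intervalIntegrable a b)]
  ring

lemma exp_int2 (hT : 0 < T) (a b : ℝ) :
    ∫ v in a..b, Real.exp (2*v/T) = (T/2) * (Real.exp (2*b/T) - Real.exp (2*a/T)) := by
  have h := exp_int hT 0 a b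
  simpa using h

lemma decomp (hT : 0 < T) (hp1 : -1 < p) {x : ℝ} (hx : 0 ≤ x) :
    f0 T p x = Real.exp (-(2*x)/T) * x ^ p
      - (2/T) * (Real.exp (-(2*x)/T) * ∫ v in (0:ℝ)..x, Real.exp (2*v/T) * (v ^ p - x ^ p)) := by
  have hT' : T ≠ 0 := hT.ne'
  have hint1 : IntervalIntegrable (base T p) volume 0 x := intInt hp1 0 x
  have hint2 : IntervalIntegrable (fun v : ℝ => Real.exp (2*v/T) * x ^ p) volume 0 x :=
    ((Real.continuous_exp.comp (by fun_prop)).mul continuous_const).intervalIntegrable _ _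
  have hsub : (∫ v in (0:ℝ)..x, Real.exp (2*v/T) * (v ^ p - x ^ p))
      = Phi T p x - ((T/2) * (Real.exp (2*x/T) - 1)) * x ^ p := by
    have hcongr : ∀ v : ℝ, Real.exp (2*v/T) * (v ^ p - x ^ p)
        = base T p v - Real.exp (2*v/T) * x ^ p := by
      intro v; unfold base; ring
    rw [intervalIntegral.integral_congr (fun v _ => hcongr v),
      intervalIntegral.integral_sub hint1 hint2]
    unfold Phi
    congr 1
    rw [intervalIntegral.integral_mul_const, exp_int2 hT]
    norm_num
  rw [hsub]
  unfold f0
  rw [show -(2*x)/T = -(2*x/T) by ring, Real.exp_neg]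
  have hE := Real.exp_ne_zero (2*x/T)
  field_simp
  ring

noncomputable def K1 (T p : ℝ) : ℝ := 1 + 4*(1/(p+1) + 1/2)
noncomputable def K2 (T p : ℝ) : ℝ := 2*T*(-p)/(2:ℝ)^(p-1)

set_option maxHeartbeats 1000000 in
/-- main tail bound -/
lemma tail_bound (hT : 0 < T) (hp1 : -1 < p) (hp0 : p < 0) {x : ℝ} (hx : 1 ≤ x) :
    |f0 T p x| ≤ K1 T p * Real.exp (-(x/(2*T))) + K2 T p * x ^ (p-1) := by
  have hT' : T ≠ 0 := hT.ne'
  have hx0 : (0:ℝ) < x := by linarith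
  have hxh : (0:ℝ) < x/2 := by linarith
  set Cp : ℝ := 1/(p+1) + 1/2 with hCp
  set c0 : ℝ := (-p) * (x/2) ^ (p-1) * T with hc0
  have hc0nn : 0 ≤ c0 := by
    apply mul_nonneg (mul_nonneg (by linarith) (Real.rpow_nonneg hxh.le _)) hT.le
  set W : ℝ → ℝ := fun v => Real.exp (2*v/T) * (v ^ p - x ^ p) with hW
  have hWint : ∀ a b : ℝ, IntervalIntegrable W volume a b := by
    intro a b
    have h1 : IntervalIntegrable (fun v : ℝ => Real.exp (2*v/T) * x ^ p) volume a b :=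
      ((Real.continuous_exp.comp (by fun_prop)).mul continuous_const).intervalIntegrable _ _
    have := (intInt (T := T) hp1 a b).sub h1
    apply this.congr
    intro v _
    unfold base; simp [hW]; ring
  -- Q1 : the piece over [0, x/2]
  have hQ1 : |∫ v in (0:ℝ)..(x/2), W v| ≤ Real.exp (x/T) * (Cp * x) := by
    have habs : |∫ v in (0:ℝ)..(x/2), W v| ≤ ∫ v in (0:ℝ)..(x/2), |W v| :=
      intervalIntegral.abs_integral_le_integral_abs hxh.le
    have hmono : (∫ v in (0:ℝ)..(x/2), |W v|)
        ≤ ∫ v in (0:ℝ)..(x/2), Real.exp (x/T) * (v ^ p + x ^ p) := by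
      apply intervalIntegral.integral_mono_on hxh.le ((hWint 0 (x/2)).abs)
      · exact (((intervalIntegrable_rpow' hp1).add (intervalIntegrable_const)).const_mul _)
      · intro v hv
        have hv0 : 0 ≤ v := hv.1
        have h1 : |W v| = Real.exp (2*v/T) * |v ^ p - x ^ p| := by
          rw [hW]; rw [abs_mul, abs_of_pos (Real.exp_pos _)]
        rw [h1]
        have h2 : |v ^ p - x ^ p| ≤ v ^ p + x ^ p := by
          have := abs_sub (v ^ p) (x ^ p)
          calc |v ^ p - x ^ p| ≤ |v ^ p| + |x ^ p| := abs_sub _ _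
            _ = v ^ p + x ^ p := by
              rw [abs_of_nonneg (Real.rpow_nonneg hv0 _),
                abs_of_nonneg (Real.rpow_nonneg hx0.le _)]
        have h3 : Real.exp (2*v/T) ≤ Real.exp (x/T) := by
          apply Real.exp_le_exp.2
          exact (div_le_div_iff_of_pos_right hT).2 (by linarith [hv.2])
        calc Real.exp (2*v/T) * |v ^ p - x ^ p|
            ≤ Real.exp (x/T) * |v ^ p - x ^ p| :=
              mul_le_mul_of_nonneg_right h3 (abs_nonneg _)
          _ ≤ Real.exp (x/T) * (v ^ p + x ^ p) :=
              mul_le_mul_of_nonneg_left h2 (Real.exp_pos _).le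
    have hval : (∫ v in (0:ℝ)..(x/2), Real.exp (x/T) * (v ^ p + x ^ p))
        = Real.exp (x/T) * ((x/2) ^ (p+1)/(p+1) + (x/2) * x ^ p) := by
      rw [intervalIntegral.integral_const_mul]
      congr 1
      rw [intervalIntegral.integral_add (intervalIntegrable_rpow' hp1) intervalIntegrable_const,
        integral_rpow (Or.inl hp1)]
      simp [Real.zero_rpow (show p + 1 ≠ 0 by linarith)]
    have hfinal : Real.exp (x/T) * ((x/2) ^ (p+1)/(p+1) + (x/2) * x ^ p)
        ≤ Real.exp (x/T) * (Cp * x) := by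
      apply mul_le_mul_of_nonneg_left ?_ (Real.exp_pos _).le
      have hA : (x/2) ^ (p+1) ≤ x := by
        calc (x/2) ^ (p+1) ≤ x ^ (p+1) :=
              Real.rpow_le_rpow hxh.le (by linarith) (by linarith)
          _ ≤ x ^ (1:ℝ) := Real.rpow_le_rpow_of_exponent_le hx (by linarith)
          _ = x := Real.rpow_one x
      have hB : x ^ p ≤ 1 := Real.rpow_le_one_of_one_le_of_nonpos hx hp0.le
      have hp1' : (0:ℝ) < p + 1 := by linarith
      rw [hCp]
      have h5 : (x/2) ^ (p+1)/(p+1) ≤ x/(p+1) :=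
        (div_le_div_iff_of_pos_right hp1').2 hA
      have h6 : (x/2) * x ^ p ≤ x * (1/2) := by nlinarith
      calc (x/2) ^ (p+1)/(p+1) + (x/2) * x ^ p ≤ x/(p+1) + x * (1/2) := by linarith
        _ = (1/(p+1) + 1/2) * x := by ring
    linarith
  -- Q2 : the piece over [x/2, x]
  have hQ2 : |∫ v in (x/2)..x, W v| ≤ c0 * (T * Real.exp (2*x/T)) := by
    have habs : |∫ v in (x/2)..x, W v| ≤ ∫ v in (x/2)..x, |W v| :=
      intervalIntegral.abs_integral_le_integral_abs (by linarith)
    have hmono : (∫ v in (x/2)..x, |W v|)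
        ≤ ∫ v in (x/2)..x, c0 * Real.exp ((x + v)/T) := by
      apply intervalIntegral.integral_mono_on (by linarith) ((hWint _ _).abs)
      · exact ((Real.continuous_exp.comp (by fun_prop)).intervalIntegrable _ _).const_mul _
      · intro v hv
        have hv0 : 0 < v := lt_of_lt_of_le hxh hv.1
        have hvx : v ≤ x := hv.2
        have hxp : x ^ p ≤ v ^ p := Real.rpow_le_rpow_of_nonpos hv0 hvx hp0.le
        have h1 : |W v| = Real.exp (2*v/T) * (v ^ p - x ^ p) := by
          rw [hW]
          exact abs_of_nonneg (mul_nonneg (Real.exp_pos _).le (by linarith))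
        rw [h1]
        have h2 : v ^ p - x ^ p ≤ (-p) * (x - v) * v ^ (p-1) :=
          rpow_sub_rpow_le hp0 hv0 hvx
        have h3 : v ^ (p-1) ≤ (x/2) ^ (p-1) :=
          Real.rpow_le_rpow_of_nonpos hxh hv.1 (by linarith)
        have h4 : x - v ≤ T * Real.exp ((x - v)/T) := le_mul_exp hT _
        have h5 : Real.exp (2*v/T) * Real.exp ((x - v)/T) = Real.exp ((x + v)/T) := by
          rw [← Real.exp_add]; congr 1; field_simp; ring
        have hev : (0:ℝ) < Real.exp (2*v/T) := Real.exp_pos _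
        calc Real.exp (2*v/T) * (v ^ p - x ^ p)
            ≤ Real.exp (2*v/T) * ((-p) * (x - v) * v ^ (p-1)) :=
              mul_le_mul_of_nonneg_left h2 hev.le
          _ ≤ Real.exp (2*v/T) * ((-p) * (x - v) * (x/2) ^ (p-1)) := by
              apply mul_le_mul_of_nonneg_left ?_ hev.le
              apply mul_le_mul_of_nonneg_left h3
              apply mul_nonneg (by linarith) (by linarith)
          _ = ((-p) * (x/2) ^ (p-1)) * (Real.exp (2*v/T) * (x - v)) := by ring
          _ ≤ ((-p) * (x/2) ^ (p-1)) * (Real.exp (2*v/T) * (T * Real.exp ((x - v)/T))) := by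
              apply mul_le_mul_of_nonneg_left ?_
                (mul_nonneg (by linarith) (Real.rpow_nonneg hxh.le _))
              apply mul_le_mul_of_nonneg_left h4 hev.le
          _ = c0 * Real.exp ((x + v)/T) := by
              rw [hc0, ← h5]; ring
    have hval : (∫ v in (x/2)..x, c0 * Real.exp ((x + v)/T))
        = c0 * (T * (Real.exp ((x + x)/T) - Real.exp ((x + x/2)/T))) := by
      rw [intervalIntegral.integral_const_mul, exp_int1 hT]
    have hfinal : c0 * (T * (Real.exp ((x + x)/T) - Real.exp ((x + x/2)/T)))
        ≤ c0 * (T * Real.exp (2*x/T)) := by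
      apply mul_le_mul_of_nonneg_left ?_ hc0nn
      apply mul_le_mul_of_nonneg_left ?_ hT.le
      rw [show x + x = 2*x by ring]
      linarith [(Real.exp_pos ((x + x/2)/T)).le]
    linarith
  -- assemble
  have hsplit : (∫ v in (0:ℝ)..x, W v)
      = (∫ v in (0:ℝ)..(x/2), W v) + ∫ v in (x/2)..x, W v :=
    (intervalIntegral.integral_add_adjacent_intervals (hWint _ _) (hWint _ _)).symm
  have e := Real.exp (-(2*x)/T)
  rw [decomp hT hp1 hx0.le]
  have habs2 : |Real.exp (-(2*x)/T) * x ^ p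
      - (2/T) * (Real.exp (-(2*x)/T) * ∫ v in (0:ℝ)..x, W v)|
      ≤ Real.exp (-(2*x)/T) * x ^ p
        + (2/T) * Real.exp (-(2*x)/T) * (|∫ v in (0:ℝ)..(x/2), W v| + |∫ v in (x/2)..x, W v|) := by
    have h1 : |∫ v in (0:ℝ)..x, W v| ≤ |∫ v in (0:ℝ)..(x/2), W v| + |∫ v in (x/2)..x, W v| := by
      rw [hsplit]; exact abs_add_le _ _
    have h2 := abs_sub (Real.exp (-(2*x)/T) * x ^ p)
      ((2/T) * (Real.exp (-(2*x)/T) * ∫ v in (0:ℝ)..x, W v))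
    have h3 : |Real.exp (-(2*x)/T) * x ^ p| = Real.exp (-(2*x)/T) * x ^ p :=
      abs_of_nonneg (mul_nonneg (Real.exp_pos _).le (Real.rpow_nonneg hx0.le _))
    have h4 : |(2/T) * (Real.exp (-(2*x)/T) * ∫ v in (0:ℝ)..x, W v)|
        = (2/T) * Real.exp (-(2*x)/T) * |∫ v in (0:ℝ)..x, W v| := by
      rw [abs_mul, abs_mul, abs_of_pos (by positivity : (0:ℝ) < 2/T),
        abs_of_pos (Real.exp_pos _)]
      ring
    have h5 : (0:ℝ) ≤ (2/T) * Real.exp (-(2*x)/T) := by positivity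
    nlinarith [mul_le_mul_of_nonneg_left h1 h5]
  -- final numeric combination
  have hterm0 : Real.exp (-(2*x)/T) * x ^ p ≤ Real.exp (-(x/(2*T))) := by
    have h1 : x ^ p ≤ 1 := Real.rpow_le_one_of_one_le_of_nonpos hx hp0.le
    have h2 : Real.exp (-(2*x)/T) ≤ Real.exp (-(x/(2*T))) := by
      apply Real.exp_le_exp.2
      rw [neg_div, neg_le_neg_iff]
      rw [div_le_div_iff₀ (by positivity) hT]
      nlinarith
    nlinarith [Real.exp_pos (-(2*x)/T), Real.rpow_nonneg hx0.le p]
  have hterm1 : (2/T) * Real.exp (-(2*x)/T) * (Real.exp (x/T) * (Cp * x))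
      ≤ 4 * Cp * Real.exp (-(x/(2*T))) := by
    have hCpnn : 0 ≤ Cp := by
      rw [hCp]
      have h1 : (0:ℝ) < p + 1 := by linarith
      have h2 := one_div_pos.2 h1
      linarith
    have g1 : Real.exp (-(2*x)/T) * Real.exp (x/T) = Real.exp (-(x/T)) := by
      rw [← Real.exp_add]; congr 1; field_simp; ring
    have g2 : x * Real.exp (-(x/T)) ≤ 2*T*Real.exp (-(x/(2*T))) := by
      have h1 := le_mul_exp (show (0:ℝ) < 2*T by linarith) x
      have h2 : Real.exp (x/(2*T)) * Real.exp (-(x/T)) = Real.exp (-(x/(2*T))) := by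
        rw [← Real.exp_add]; congr 1; field_simp; ring
      calc x * Real.exp (-(x/T)) ≤ (2*T*Real.exp (x/(2*T))) * Real.exp (-(x/T)) :=
            mul_le_mul_of_nonneg_right h1 (Real.exp_pos _).le
        _ = 2*T*Real.exp (-(x/(2*T))) := by rw [mul_assoc, h2]
    calc (2/T) * Real.exp (-(2*x)/T) * (Real.exp (x/T) * (Cp * x))
        = (2*Cp/T) * (x * (Real.exp (-(2*x)/T) * Real.exp (x/T))) := by ring
      _ = (2*Cp/T) * (x * Real.exp (-(x/T))) := by rw [g1]
      _ ≤ (2*Cp/T) * (2*T*Real.exp (-(x/(2*T)))) := by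
          apply mul_le_mul_of_nonneg_left g2 (by positivity)
      _ = 4 * Cp * Real.exp (-(x/(2*T))) := by field_simp; ring
  have hterm2 : (2/T) * Real.exp (-(2*x)/T) * (c0 * (T * Real.exp (2*x/T)))
      = K2 T p * x ^ (p-1) := by
    have harg : Real.exp (-(2*x)/T) * Real.exp (2*x/T) = 1 := by
      rw [← Real.exp_add, show -(2*x)/T + 2*x/T = 0 by ring, Real.exp_zero]
    have hdiv : (x/2) ^ (p-1) = x ^ (p-1) / (2:ℝ) ^ (p-1) :=
      Real.div_rpow hx0.le (by norm_num : (0:ℝ) ≤ 2) (p-1)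
    calc (2/T) * Real.exp (-(2*x)/T) * (c0 * (T * Real.exp (2*x/T)))
        = (c0 * (T * (2/T))) * (Real.exp (-(2*x)/T) * Real.exp (2*x/T)) := by ring
      _ = (c0 * 2) * 1 := by rw [harg, show T * (2/T) = 2 by field_simp]
      _ = K2 T p * x ^ (p-1) := by unfold c0; rw [hdiv]; unfold K2; ring
  calc |Real.exp (-(2*x)/T) * x ^ p
      - (2/T) * (Real.exp (-(2*x)/T) * ∫ v in (0:ℝ)..x, W v)|
      ≤ Real.exp (-(2*x)/T) * x ^ p
        + (2/T) * Real.exp (-(2*x)/T) * (|∫ v in (0:ℝ)..(x/2), W v| + |∫ v in (x/2)..x, W v|) :=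
        habs2
    _ ≤ Real.exp (-(2*x)/T) * x ^ p
        + (2/T) * Real.exp (-(2*x)/T) * ((Real.exp (x/T) * (Cp * x)) + c0 * (T * Real.exp (2*x/T))) := by
        have h5 : (0:ℝ) ≤ (2/T) * Real.exp (-(2*x)/T) := by positivity
        nlinarith [mul_le_mul_of_nonneg_left (add_le_add hQ1 hQ2) h5]
    _ ≤ Real.exp (-(x/(2*T))) + 4 * Cp * Real.exp (-(x/(2*T))) + K2 T p * x ^ (p-1) := by
        have := hterm0
        have := hterm1
        have h7 : (2/T) * Real.exp (-(2*x)/T) * ((Real.exp (x/T) * (Cp * x)) + c0 * (T * Real.exp (2*x/T)))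
            = (2/T) * Real.exp (-(2*x)/T) * (Real.exp (x/T) * (Cp * x))
              + (2/T) * Real.exp (-(2*x)/T) * (c0 * (T * Real.exp (2*x/T))) := by ring
        rw [h7, hterm2]
        linarith
    _ = K1 T p * Real.exp (-(x/(2*T))) + K2 T p * x ^ (p-1) := by
        unfold K1; unfold Cp; ring

set_option maxHeartbeats 1000000 in
lemma integrableOn_f0 (hT : 0 < T) (hp1 : -1 < p) (hp0 : p < 0) :
    IntegrableOn (f0 T p) (Ici 0) := by
  have hT' : T ≠ 0 := hT.ne'
  have hm : Measurable (f0 T p) := by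
    unfold f0
    exact (by fun_prop : Measurable fun x : ℝ => x ^ p).sub
      (measurable_const.mul
        ((by fun_prop : Measurable fun x : ℝ => Real.exp (-(2*x)/T)).mul
          (continuous_Phi hp1).measurable))
  have h01 : IntegrableOn (f0 T p) (Icc 0 1) := by
    have part1 : IntegrableOn (fun x : ℝ => x ^ p) (Icc (0:ℝ) 1) := by
      rw [integrableOn_Icc_iff_integrableOn_Ioc]
      exact (intervalIntegrable_rpow' (a := 0) (b := 1) hp1).1
    have part2 : IntegrableOn (fun x : ℝ => (2/T) * (Real.exp (-(2*x)/T) * Phi T p x))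
        (Icc (0:ℝ) 1) := by
      apply Continuous.integrableOn_Icc
      exact continuous_const.mul
        ((Real.continuous_exp.comp (by fun_prop)).mul (continuous_Phi hp1))
    unfold f0
    exact part1.sub part2
  have h1i : IntegrableOn (f0 T p) (Ioi 1) := by
    have hg1 : IntegrableOn (fun x : ℝ => Real.exp (-(x/(2*T)))) (Ioi 1) := by
      have heq : (fun x : ℝ => Real.exp (-(x/(2*T))))
          = (fun x : ℝ => Real.exp (-(1/(2*T)) * x)) := by
        funext x; congr 1; ring
      rw [heq]
      exact exp_neg_integrableOn_Ioi 1 (by positivity)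
    have hg2 : IntegrableOn (fun x : ℝ => x ^ (p-1)) (Ioi 1) :=
      integrableOn_Ioi_rpow_of_lt (by linarith) one_pos
    have hg : IntegrableOn
        (fun x : ℝ => K1 T p * Real.exp (-(x/(2*T))) + K2 T p * x ^ (p-1)) (Ioi 1) :=
      (hg1.const_mul _).add (hg2.const_mul _)
    apply MeasureTheory.Integrable.mono hg (hm.aestronglyMeasurable.restrict)
    rw [ae_restrict_iff' measurableSet_Ioi]
    filter_upwards with x hx
    have hb := tail_bound hT hp1 hp0 hx.le
    have hgnn : 0 ≤ K1 T p * Real.exp (-(x/(2*T))) + K2 T p * x ^ (p-1) := by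
      have := abs_nonneg (f0 T p x); linarith
    rw [Real.norm_eq_abs, Real.norm_eq_abs, abs_of_nonneg hgnn]
    exact hb
  apply (h01.union h1i).mono_set
  intro x hx
  rcases le_or_gt x 1 with h | h
  · exact Or.inl ⟨hx, h⟩
  · exact Or.inr h

lemma G_tendsto (hT : 0 < T) (hp1 : -1 < p) (hp0 : p < 0) :
    Tendsto (fun x => Real.exp (-(2*x)/T) * Phi T p x) atTop (nhds 0) := by
  have hT' : T ≠ 0 := hT.ne'
  have hp1' : (0:ℝ) < p + 1 := by linarith
  -- upper bound function
  have hbound : ∀ x : ℝ, 1 ≤ x →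
      Real.exp (-(2*x)/T) * Phi T p x
        ≤ (2*T/(p+1)) * Real.exp (-(x/(2*T))) + (T/2) * (x/2) ^ p := by
    intro x hx
    have hx0 : (0:ℝ) < x := by linarith
    have hxh : (0:ℝ) < x/2 := by linarith
    have hsplit : Phi T p x = (∫ v in (0:ℝ)..(x/2), base T p v)
        + ∫ v in (x/2)..x, base T p v :=
      (intervalIntegral.integral_add_adjacent_intervals (intInt hp1 _ _) (intInt hp1 _ _)).symm
    have hA1 : (∫ v in (0:ℝ)..(x/2), base T p v)
        ≤ Real.exp (x/T) * ((x/2) ^ (p+1)/(p+1)) := by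
      have hmono : (∫ v in (0:ℝ)..(x/2), base T p v)
          ≤ ∫ v in (0:ℝ)..(x/2), Real.exp (x/T) * v ^ p := by
        apply intervalIntegral.integral_mono_on hxh.le (intInt hp1 _ _)
          ((intervalIntegrable_rpow' hp1).const_mul _)
        intro v hv
        unfold base
        apply mul_le_mul_of_nonneg_right ?_ (Real.rpow_nonneg hv.1 _)
        exact Real.exp_le_exp.2 ((div_le_div_iff_of_pos_right hT).2 (by linarith [hv.2]))
      rw [intervalIntegral.integral_const_mul, integral_rpow (Or.inl hp1)] at hmono
      calc (∫ v in (0:ℝ)..(x/2), base T p v)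
          ≤ Real.exp (x/T) * (((x/2) ^ (p+1) - 0 ^ (p+1))/(p+1)) := hmono
        _ = Real.exp (x/T) * ((x/2) ^ (p+1)/(p+1)) := by
            rw [Real.zero_rpow (by linarith : p + 1 ≠ 0)]; ring_nf
    have hA2 : (∫ v in (x/2)..x, base T p v)
        ≤ (x/2) ^ p * ((T/2) * Real.exp (2*x/T)) := by
      have hmono : (∫ v in (x/2)..x, base T p v)
          ≤ ∫ v in (x/2)..x, (x/2) ^ p * Real.exp (2*v/T) := by
        apply intervalIntegral.integral_mono_on (by linarith) (intInt hp1 _ _)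
          (((Real.continuous_exp.comp (by fun_prop)).intervalIntegrable _ _).const_mul _)
        intro v hv
        unfold base
        have h1 : v ^ p ≤ (x/2) ^ p :=
          Real.rpow_le_rpow_of_nonpos hxh hv.1 hp0.le
        calc Real.exp (2*v/T) * v ^ p ≤ Real.exp (2*v/T) * (x/2) ^ p :=
              mul_le_mul_of_nonneg_left h1 (Real.exp_pos _).le
          _ = (x/2) ^ p * Real.exp (2*v/T) := by ring
      rw [intervalIntegral.integral_const_mul, exp_int2 hT] at hmono
      calc (∫ v in (x/2)..x, base T p v)
          ≤ (x/2) ^ p * ((T/2) * (Real.exp (2*x/T) - Real.exp (2*(x/2)/T))) := hmono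
        _ ≤ (x/2) ^ p * ((T/2) * Real.exp (2*x/T)) := by
            apply mul_le_mul_of_nonneg_left ?_ (Real.rpow_nonneg hxh.le _)
            apply mul_le_mul_of_nonneg_left ?_ (by linarith)
            linarith [(Real.exp_pos (2*(x/2)/T)).le]
    have he : (0:ℝ) < Real.exp (-(2*x)/T) := Real.exp_pos _
    have hstep : Real.exp (-(2*x)/T) * Phi T p x
        ≤ Real.exp (-(2*x)/T) * (Real.exp (x/T) * ((x/2) ^ (p+1)/(p+1))
          + (x/2) ^ p * ((T/2) * Real.exp (2*x/T))) := by
      apply mul_le_mul_of_nonneg_left ?_ he.le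
      rw [hsplit]; exact add_le_add hA1 hA2
    have hg1 : Real.exp (-(2*x)/T) * Real.exp (x/T) = Real.exp (-(x/T)) := by
      rw [← Real.exp_add]; congr 1; field_simp; ring
    have hg2 : Real.exp (-(2*x)/T) * Real.exp (2*x/T) = 1 := by
      rw [← Real.exp_add, show -(2*x)/T + 2*x/T = 0 by ring, Real.exp_zero]
    have hxp1 : (x/2) ^ (p+1) ≤ x := by
      calc (x/2) ^ (p+1) ≤ x ^ (p+1) :=
            Real.rpow_le_rpow hxh.le (by linarith) (by linarith)
        _ ≤ x ^ (1:ℝ) := Real.rpow_le_rpow_of_exponent_le hx (by linarith)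
        _ = x := Real.rpow_one x
    have hfin1 : Real.exp (-(2*x)/T) * (Real.exp (x/T) * ((x/2) ^ (p+1)/(p+1)))
        ≤ (2*T/(p+1)) * Real.exp (-(x/(2*T))) := by
      have hre : Real.exp (-(2*x)/T) * (Real.exp (x/T) * ((x/2) ^ (p+1)/(p+1)))
          = ((x/2) ^ (p+1)/(p+1)) * Real.exp (-(x/T)) := by
        rw [← hg1]; ring
      rw [hre]
      have h1 : ((x/2) ^ (p+1)/(p+1)) * Real.exp (-(x/T)) ≤ (x/(p+1)) * Real.exp (-(x/T)) := by
        apply mul_le_mul_of_nonneg_right ?_ (Real.exp_pos _).le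
        exact (div_le_div_iff_of_pos_right hp1').2 hxp1
      have h2 : x * Real.exp (-(x/T)) ≤ 2*T*Real.exp (-(x/(2*T))) := by
        have ha := le_mul_exp (show (0:ℝ) < 2*T by linarith) x
        have hb : Real.exp (x/(2*T)) * Real.exp (-(x/T)) = Real.exp (-(x/(2*T))) := by
          rw [← Real.exp_add]; congr 1; field_simp; ring
        calc x * Real.exp (-(x/T)) ≤ (2*T*Real.exp (x/(2*T))) * Real.exp (-(x/T)) :=
              mul_le_mul_of_nonneg_right ha (Real.exp_pos _).le
          _ = 2*T*Real.exp (-(x/(2*T))) := by rw [mul_assoc, hb]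
      calc ((x/2) ^ (p+1)/(p+1)) * Real.exp (-(x/T)) ≤ (x/(p+1)) * Real.exp (-(x/T)) := h1
        _ = (1/(p+1)) * (x * Real.exp (-(x/T))) := by ring
        _ ≤ (1/(p+1)) * (2*T*Real.exp (-(x/(2*T)))) := by
            apply mul_le_mul_of_nonneg_left h2 (by positivity)
        _ = (2*T/(p+1)) * Real.exp (-(x/(2*T))) := by ring
    have hfin2 : Real.exp (-(2*x)/T) * ((x/2) ^ p * ((T/2) * Real.exp (2*x/T)))
        = (T/2) * (x/2) ^ p := by
      calc Real.exp (-(2*x)/T) * ((x/2) ^ p * ((T/2) * Real.exp (2*x/T)))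
          = ((T/2) * (x/2) ^ p) * (Real.exp (-(2*x)/T) * Real.exp (2*x/T)) := by ring
        _ = (T/2) * (x/2) ^ p := by rw [hg2]; ring
    calc Real.exp (-(2*x)/T) * Phi T p x
        ≤ Real.exp (-(2*x)/T) * (Real.exp (x/T) * ((x/2) ^ (p+1)/(p+1)))
          + Real.exp (-(2*x)/T) * ((x/2) ^ p * ((T/2) * Real.exp (2*x/T))) := by
          rw [← mul_add]; exact hstep
      _ ≤ (2*T/(p+1)) * Real.exp (-(x/(2*T))) + (T/2) * (x/2) ^ p := by
          rw [hfin2] at *; linarith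
  -- the bound tends to 0
  have ht1 : Tendsto (fun x : ℝ => Real.exp (-(x/(2*T)))) atTop (nhds 0) := by
    apply Real.tendsto_exp_atBot.comp
    have h1 : Tendsto (fun x : ℝ => x/(2*T)) atTop atTop :=
      tendsto_id.atTop_div_const (by positivity)
    exact tendsto_neg_atBot_iff.2 h1
  have ht2 : Tendsto (fun x : ℝ => (x/2) ^ p) atTop (nhds 0) := by
    have h1 : Tendsto (fun x : ℝ => x ^ (-(-p))) atTop (nhds 0) :=
      tendsto_rpow_neg_atTop (by linarith)
    have h2 : Tendsto (fun x : ℝ => x/2) atTop atTop :=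
      tendsto_id.atTop_div_const (by norm_num)
    have h3 := h1.comp h2
    simp only [neg_neg] at h3
    exact h3
  have htg : Tendsto (fun x : ℝ => (2*T/(p+1)) * Real.exp (-(x/(2*T))) + (T/2) * (x/2) ^ p)
      atTop (nhds 0) := by
    have := (ht1.const_mul (2*T/(p+1))).add (ht2.const_mul (T/2))
    simpa using this
  apply squeeze_zero' ?_ ?_ htg
  · filter_upwards [eventually_ge_atTop (0:ℝ)] with x hx
    apply mul_nonneg (Real.exp_pos _).le
    apply intervalIntegral.integral_nonneg hx
    intro v hv
    exact mul_nonneg (Real.exp_pos _).le (Real.rpow_nonneg hv.1 _)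
  · filter_upwards [eventually_ge_atTop (1:ℝ)] with x hx
    exact hbound x hx

lemma integral_f0 (hT : 0 < T) (hp1 : -1 < p) (hp0 : p < 0) :
    ∫ x in Ioi (0:ℝ), f0 T p x = 0 := by
  have hIci := integrableOn_f0 hT hp1 hp0
  have hInt : IntegrableOn (f0 T p) (Ioi 0) := hIci.mono_set Ioi_subset_Ici_self
  have h1 := MeasureTheory.intervalIntegral_tendsto_integral_Ioi 0 hInt tendsto_id
  have hcontG : Continuous (fun x => Real.exp (-(2*x)/T) * Phi T p x) :=
    (Real.continuous_exp.comp (by fun_prop)).mul (continuous_Phi hp1)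
  have heq : ∀ᶠ R in atTop, Real.exp (-(2*R)/T) * Phi T p R
      = ∫ x in (0:ℝ)..R, f0 T p x := by
    filter_upwards [eventually_ge_atTop (0:ℝ)] with R hR
    have hftc := intervalIntegral.integral_eq_sub_of_hasDeriv_right_of_le hR
      (hcontG.continuousOn)
      (fun x hx => (G_deriv hT hp1 hx.1).hasDerivWithinAt)
      ((hIci.mono_set (by
        rw [uIcc_of_le hR]
        exact fun y hy => hy.1)).intervalIntegrable)
    rw [hftc]
    have hG0 : Real.exp (-(2*(0:ℝ))/T) * Phi T p 0 = 0 := by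
      unfold Phi
      simp
    rw [hG0, sub_zero]
  have h2 : Tendsto (fun R => ∫ x in (0:ℝ)..R, f0 T p x) atTop (nhds 0) :=
    (G_tendsto hT hp1 hp0).congr' heq
  exact tendsto_nhds_unique h1 h2

end KIZ

open MeasureTheory Real

theorem K_integral_zero (H T : ℝ) (hH : H ∈ Set.Ioo (0 : ℝ) (1/2)) (hT : 0 < T) :
    ∫ u : ℝ, (if u ≤ 0 then
        (-u) ^ (2*H - 1) -
          (2/T) * ∫ s in u..0, Real.exp (2*s/T) * (s - u) ^ (2*H - 1)
      else 0) = 0 := by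
  set p := 2*H - 1 with hp
  have hp1 : -1 < p := by simp only [hp]; linarith [hH.1]
  have hp0 : p < 0 := by simp only [hp]; linarith [hH.2, (by norm_num : (1:ℝ)/2 = 0.5)]
  have key : ∀ u : ℝ, (if u ≤ 0 then
        (-u) ^ p - (2/T) * ∫ s in u..0, Real.exp (2*s/T) * (s - u) ^ p
      else 0) = Set.indicator (Set.Ioi (0:ℝ)) (KIZ.f0 T p) (-u) := by
    intro u
    by_cases hu : u ≤ 0
    · rw [if_pos hu]
      rcases eq_or_lt_of_le hu with rfl | hu0
      · simp [Real.zero_rpow hp0.ne, KIZ.f0]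
      · rw [Set.indicator_of_mem (by simpa using hu0 : -u ∈ Set.Ioi (0:ℝ))]
        unfold KIZ.f0
        rw [KIZ.subst_lemma u, show -(2*(-u)) = 2*u by ring]
    · rw [if_neg hu]
      rw [Set.indicator_of_notMem]
      simp only [Set.mem_Ioi, not_lt]
      linarith [not_le.mp hu]
  calc ∫ u : ℝ, (if u ≤ 0 then
        (-u) ^ p - (2/T) * ∫ s in u..0, Real.exp (2*s/T) * (s - u) ^ p
      else 0)
      = ∫ u : ℝ, Set.indicator (Set.Ioi (0:ℝ)) (KIZ.f0 T p) (-u) := by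
        exact integral_congr_ae (Filter.Eventually.of_forall key)
    _ = ∫ x : ℝ, Set.indicator (Set.Ioi (0:ℝ)) (KIZ.f0 T p) x :=
        integral_neg_eq_self _ volume
    _ = ∫ x in Set.Ioi (0:ℝ), KIZ.f0 T p x := integral_indicator measurableSet_Ioi
    _ = 0 := KIZ.integral_f0 hT hp1 hp0
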